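/- For the PCA on the N-cycle with irreducible local transition matrix T of period d ≥ 2 and cyclic classes C_0,...,C_{d-1}, every configuration not in S := C_0^{⊗N} ∪ ... ∪ C_{d-1}^{⊗N} is transient: starting from such a configuration there is a finite time t_0 ≤ ⌈N/(2n_v)⌉ such that the chain reaches S with positive probability by time t_0, and S is absorbing. -/

import Mathlib

open Matrix Finset MeasureTheory

/-- A row-stochastic matrix: nonnegative entries, each row sums to 1. -/
def RowStochastic {S : Type*} [Fintype S] (T : Matrix S S ℝ) : Prop :=
  (∀ j k, 0 ≤ T j k) ∧ ∀ j, ∑ k, T j k = 1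

/-- Irreducibility of a nonnegative matrix: every state reaches every state. -/
def MatIrreducible {S : Type*} [Fintype S] [DecidableEq S] (T : Matrix S S ℝ) : Prop :=
  ∀ i j, ∃ t : ℕ, 0 < (T ^ t) i j

/-- `d` is the period of state `i`: the gcd of the set of positive return times. -/
def IsGcdPeriod {S : Type*} [Fintype S] [DecidableEq S] (T : Matrix S S ℝ) (i : S) (d : ℕ) : Prop :=
  (∀ m : ℕ, 0 < m → 0 < (T ^ m) i i → d ∣ m) ∧
    ∀ e : ℕ, (∀ m : ℕ, 0 < m → 0 < (T ^ m) i i → e ∣ m) → e ∣ d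

/-- The neighborhood of node `n` on the `N`-cycle: all nodes within cyclic distance `nv`. -/
def nbhd (N nv : ℕ) (n : Fin N) : Finset (Fin N) :=
  Finset.univ.filter fun i => (n.val + N - i.val) % N ≤ nv ∨ (i.val + N - n.val) % N ≤ nv

/-- The PCA global transition matrix on configurations. -/
noncomputable def pcaP (N K nv : ℕ) (T : Matrix (Fin K) (Fin K) ℝ) :
    Matrix (Fin N → Fin K) (Fin N → Fin K) ℝ :=
  Matrix.of fun x y =>
    ∏ n : Fin N, (((nbhd N nv n).card : ℝ)⁻¹ * ∑ i ∈ nbhd N nv n, T (x i) (y n))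

/-- Cyclic class decomposition of `[K]` for `T` with period `d`. -/
def CyclicClasses {K : ℕ} (T : Matrix (Fin K) (Fin K) ℝ) (d : ℕ)
    (C : ℕ → Finset (Fin K)) : Prop :=
  (∀ r, C (r + d) = C r) ∧ (∀ k : Fin K, ∃! r : ℕ, r < d ∧ k ∈ C r) ∧
    ∀ j k, 0 < T j k → ∃ r, j ∈ C r ∧ k ∈ C (r + 1)

/- ---------- auxiliary machinery ---------- -/

/-- one step toward node 0 along the shorter arc -/
def parent (N nv : ℕ) (hN : 0 < N) (n : Fin N) : Fin N :=
  if _h1 : n.val ≤ nv then ⟨0, hN⟩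
  else if _h2 : N - n.val ≤ nv then ⟨0, hN⟩
  else if _h3 : 2 * n.val ≤ N then ⟨n.val - nv, lt_of_le_of_lt (Nat.sub_le _ _) n.isLt⟩
  else ⟨n.val + nv, by have := n.isLt; omega⟩

/-- cyclic distance to node 0 -/
def cyc (N : ℕ) (n : Fin N) : ℕ := min n.val (N - n.val)

lemma mem_nbhd_self (N nv : ℕ) (n : Fin N) : n ∈ nbhd N nv n := by
  simp only [nbhd, mem_filter, mem_univ, true_and]
  left
  have h : n.val + N - n.val = N := by omega
  rw [h, Nat.mod_self]; exact Nat.zero_le _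

lemma parent_mem_nbhd (N nv : ℕ) (hN : 0 < N) (n : Fin N) :
    parent N nv hN n ∈ nbhd N nv n := by
  have hlt := n.isLt
  simp only [nbhd, mem_filter, mem_univ, true_and, parent]
  split_ifs with h1 h2 h3
  · left
    have : n.val + N - 0 = n.val + N := by omega
    rw [this, Nat.add_mod_right, Nat.mod_eq_of_lt hlt]; exact h1
  · right
    have : (0 : ℕ) + N - n.val = N - n.val := by omega
    rw [this, Nat.mod_eq_of_lt (by omega)]; exact h2
  · left
    have : n.val + N - (n.val - nv) = N + nv := by omega
    rw [this, Nat.add_mod_left, Nat.mod_eq_of_lt (by omega)]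
  · right
    have : n.val + nv + N - n.val = N + nv := by omega
    rw [this, Nat.add_mod_left, Nat.mod_eq_of_lt (by omega)]

lemma cyc_parent_le (N nv : ℕ) (hN : 0 < N) (n : Fin N) :
    cyc N (parent N nv hN n) ≤ cyc N n - nv := by
  have hlt := n.isLt
  simp only [cyc, parent]
  split_ifs with h1 h2 h3 <;> simp only [] <;> omega

lemma parent_iter_eq_zero (N nv : ℕ) (hN : 0 < N) :
    ∀ (t : ℕ) (n : Fin N), cyc N n ≤ t * nv → (parent N nv hN)^[t] n = ⟨0, hN⟩ := by
  intro t
  induction t with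
  | zero =>
    intro n h
    simp only [Nat.zero_mul, Nat.le_zero] at h
    have hlt := n.isLt
    simp only [cyc] at h
    rw [Function.iterate_zero_apply]
    have hv : n.val = 0 := by omega
    exact Fin.ext hv
  | succ t ih =>
    intro n h
    rw [Function.iterate_succ_apply]
    apply ih
    have := cyc_parent_le N nv hN n
    rw [Nat.succ_mul] at h
    omega

lemma pcaP_nonneg {N K nv : ℕ} {T : Matrix (Fin K) (Fin K) ℝ}
    (hT0 : ∀ j k, 0 ≤ T j k) (x y : Fin N → Fin K) : 0 ≤ pcaP N K nv T x y := by
  simp only [pcaP, Matrix.of_apply]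
  apply Finset.prod_nonneg
  intro n _
  exact mul_nonneg (by positivity) (Finset.sum_nonneg fun i _ => hT0 _ _)

lemma pcaP_pow_nonneg {N K nv : ℕ} {T : Matrix (Fin K) (Fin K) ℝ}
    (hT0 : ∀ j k, 0 ≤ T j k) (t : ℕ) (x y : Fin N → Fin K) :
    0 ≤ ((pcaP N K nv T) ^ t) x y := by
  induction t generalizing x y with
  | zero =>
    rw [pow_zero, Matrix.one_apply]
    split_ifs <;> norm_num
  | succ t ih =>
    rw [pow_succ, Matrix.mul_apply]
    exact Finset.sum_nonneg fun w _ => mul_nonneg (ih x w) (pcaP_nonneg hT0 w y)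

lemma pcaP_rowsum {N K nv : ℕ} {T : Matrix (Fin K) (Fin K) ℝ}
    (hT : RowStochastic T) (x : Fin N → Fin K) :
    ∑ y : Fin N → Fin K, pcaP N K nv T x y = 1 := by
  have hcard : ∀ n : Fin N, (0 : ℝ) < (nbhd N nv n).card := by
    intro n
    exact_mod_cast Finset.card_pos.mpr ⟨n, mem_nbhd_self N nv n⟩
  have hswap : ∑ y : Fin N → Fin K, pcaP N K nv T x y
      = ∏ n : Fin N, ∑ k : Fin K,
          (((nbhd N nv n).card : ℝ)⁻¹ * ∑ i ∈ nbhd N nv n, T (x i) k) := by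
    rw [Fintype.prod_sum]
    rfl
  rw [hswap]
  apply Finset.prod_eq_one
  intro n _
  rw [← Finset.mul_sum, Finset.sum_comm]
  have h2 : ∑ i ∈ nbhd N nv n, ∑ k : Fin K, T (x i) k = (nbhd N nv n).card := by
    rw [Finset.sum_congr rfl fun i _ => hT.2 (x i)]
    simp
  rw [h2, inv_mul_cancel₀ (ne_of_gt (hcard n))]

lemma classes_mod {K d : ℕ} {C : ℕ → Finset (Fin K)}
    (hper : ∀ r, C (r + d) = C r) (r : ℕ) : C r = C (r % d) := by
  have hq : ∀ q s, C (s + d * q) = C s := by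
    intro q
    induction q with
    | zero => intro s; simp
    | succ q ih =>
      intro s
      have : s + d * (q + 1) = s + d * q + d := by ring
      rw [this, hper, ih]
  conv_lhs => rw [← Nat.mod_add_div r d, hq]

theorem stmt_3 {K N nv d : ℕ} (hN : 0 < N) (hnv : 0 < nv)
    (T : Matrix (Fin K) (Fin K) ℝ) (hT : RowStochastic T)
    (hirr : MatIrreducible T) (hd : 2 ≤ d) (hper : ∀ i, IsGcdPeriod T i d)
    (C : ℕ → Finset (Fin K)) (hC : CyclicClasses T d C) :
    (∀ x : Fin N → Fin K, (¬ ∃ r, ∀ n, x n ∈ C r) →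
      ∃ t₀ ≤ (N + 2 * nv - 1) / (2 * nv),
        0 < ∑ y ∈ Finset.univ.filter (fun y : Fin N → Fin K => ∃ r < d, ∀ n, y n ∈ C r),
              ((pcaP N K nv T) ^ t₀) x y) ∧
    ∀ x : Fin N → Fin K, (∃ r, ∀ n, x n ∈ C r) →
      ∑ y ∈ Finset.univ.filter (fun y : Fin N → Fin K => ∃ r < d, ∀ n, y n ∈ C r),
        pcaP N K nv T x y = 1 := by
  classical
  have hT0 := hT.1
  have hd0 : 0 < d := by omega
  have hCper : ∀ r, C r = C (r % d) := classes_mod hC.1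
  -- a positive-probability successor of every local state
  have hsuccEx : ∀ j : Fin K, ∃ k, 0 < T j k := by
    intro j
    by_contra h
    push_neg at h
    have hz : ∑ k, T j k = 0 :=
      Finset.sum_eq_zero fun k _ => le_antisymm (h k) (hT0 j k)
    rw [hT.2 j] at hz; norm_num at hz
  choose succ hsucc using hsuccEx
  constructor
  · -- positive probability of reaching S
    intro x _
    refine ⟨(N + 2 * nv - 1) / (2 * nv), le_refl _, ?_⟩
    set t₀ := (N + 2 * nv - 1) / (2 * nv) with ht₀def
    obtain ⟨z, hz⟩ : ∃ z : ℕ → Fin N → Fin K,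
        z = fun t n => succ^[t] (x ((parent N nv hN)^[t] n)) := ⟨_, rfl⟩
    -- ceiling bound
    have hbound : N ≤ t₀ * (2 * nv) := by
      by_contra hcon
      push_neg at hcon
      have hm : 0 < 2 * nv := by omega
      have h2 : (t₀ + 1) * (2 * nv) ≤ N + 2 * nv - 1 := by
        rw [add_mul, one_mul]; omega
      have h3 := (Nat.le_div_iff_mul_le hm).mpr h2
      rw [← ht₀def] at h3
      omega
    -- after t₀ steps every parent chain has reached node 0
    have hzt : ∀ n : Fin N, z t₀ n = succ^[t₀] (x ⟨0, hN⟩) := by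
      intro n
      have hmul : t₀ * (2 * nv) = 2 * (t₀ * nv) := by ring
      have h1 : cyc N n ≤ t₀ * nv := by
        have hlt := n.isLt
        simp only [cyc]; omega
      rw [hz]
      simp only []
      rw [parent_iter_eq_zero N nv hN t₀ n h1]
    -- each step of the constructed path has positive probability
    have hstep : ∀ t, 0 < pcaP N K nv T (z t) (z (t + 1)) := by
      intro t
      have hzsucc : ∀ n, z (t + 1) n = succ (z t (parent N nv hN n)) := by
        intro n
        rw [hz]
        simp only []
        rw [Function.iterate_succ_apply' succ, Function.iterate_succ_apply (parent N nv hN)]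
      simp only [pcaP, Matrix.of_apply]
      apply Finset.prod_pos
      intro n _
      apply mul_pos
      · have : (0 : ℝ) < (nbhd N nv n).card := by
          exact_mod_cast Finset.card_pos.mpr ⟨n, mem_nbhd_self N nv n⟩
        exact inv_pos.mpr this
      · have hp : 0 < T (z t (parent N nv hN n)) (z (t + 1) n) := by
          rw [hzsucc n]; exact hsucc _
        exact lt_of_lt_of_le hp
          (Finset.single_le_sum (fun i _ => hT0 _ _) (parent_mem_nbhd N nv hN n))
    -- positive probability of the whole path
    have hpow : ∀ t, 0 < ((pcaP N K nv T) ^ t) x (z t) := by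
      intro t
      induction t with
      | zero =>
        have hz0 : z 0 = x := by
          funext n; rw [hz]; simp
        rw [pow_zero, hz0, Matrix.one_apply_eq]
        norm_num
      | succ t ih =>
        rw [pow_succ, Matrix.mul_apply]
        refine lt_of_lt_of_le (mul_pos ih (hstep t)) ?_
        exact Finset.single_le_sum
          (fun w _ => mul_nonneg (pcaP_pow_nonneg hT0 t x w) (pcaP_nonneg hT0 w (z (t + 1))))
          (Finset.mem_univ _)
    -- the endpoint lies in S
    obtain ⟨r, ⟨hrd, hrmem⟩, -⟩ := hC.2.1 (succ^[t₀] (x ⟨0, hN⟩))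
    have hmem : z t₀ ∈ Finset.univ.filter
        (fun y : Fin N → Fin K => ∃ r < d, ∀ n, y n ∈ C r) := by
      refine Finset.mem_filter.mpr ⟨Finset.mem_univ _, r, hrd, fun n => ?_⟩
      rw [hzt n]; exact hrmem
    exact lt_of_lt_of_le (hpow t₀)
      (Finset.single_le_sum (fun y _ => pcaP_pow_nonneg hT0 t₀ x y) hmem)
  · -- S is absorbing
    rintro x ⟨r, hr⟩
    have key : ∀ y : Fin N → Fin K,
        pcaP N K nv T x y ≠ 0 → ∃ r' < d, ∀ n, y n ∈ C r' := by
      intro y hy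
      by_contra hcon
      push_neg at hcon
      obtain ⟨n₀, hn₀⟩ := hcon ((r + 1) % d) (Nat.mod_lt _ hd0)
      apply hy
      simp only [pcaP, Matrix.of_apply]
      apply Finset.prod_eq_zero (Finset.mem_univ n₀)
      have hzero : ∑ i ∈ nbhd N nv n₀, T (x i) (y n₀) = 0 := by
        apply Finset.sum_eq_zero
        intro i _
        by_contra hti
        have hpos : 0 < T (x i) (y n₀) := lt_of_le_of_ne (hT0 _ _) (Ne.symm hti)
        obtain ⟨ρ, hρ1, hρ2⟩ := hC.2.2 _ _ hpos
        obtain ⟨r0, -, hun⟩ := hC.2.1 (x i)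
        have e1 : ρ % d = r0 := hun _ ⟨Nat.mod_lt _ hd0, by rw [← hCper ρ]; exact hρ1⟩
        have e2 : r % d = r0 := hun _ ⟨Nat.mod_lt _ hd0, by rw [← hCper r]; exact hr i⟩
        have h3 : (ρ + 1) % d = (r + 1) % d := by
          conv_lhs => rw [Nat.add_mod, e1]
          conv_rhs => rw [Nat.add_mod, e2]
        have : y n₀ ∈ C ((r + 1) % d) := by
          rw [← h3, ← hCper (ρ + 1)]; exact hρ2
        exact hn₀ this
      rw [hzero, mul_zero]
    rw [Finset.sum_filter_of_ne (fun y _ hy => key y hy)]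
    exact pcaP_rowsum hT x
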